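/- Let M be an n×d real matrix and G an n×s real matrix with GᵀMMᵀG positive definite. Let v ∈ ℝⁿ with Mᵀv ≠ 0 and σ ∈ ℝ^s nonzero; set μ := 1/(2√(σᵀ(GᵀMMᵀG)⁻¹σ)), λ := −(GᵀMMᵀG)⁻¹GᵀMMᵀv, Z := I_d − MᵀG(GᵀMMᵀG)⁻¹GᵀM, R' := MᵀG·((G − μ·(v σᵀ)/‖Mᵀv‖)ᵀMMᵀG)⁻¹·(G − μ·(v σᵀ)/‖Mᵀv‖)ᵀM, and R := I_d − R'. Then (2/3)·‖Z Mᵀv‖² ≤ vᵀ M R Mᵀ v ≤ 2·‖Z Mᵀv‖². -/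

import Mathlib

open Matrix InnerProductSpace

/-- Apply a real matrix to a vector of the corresponding Euclidean space. -/
noncomputable def mulVecE {m n : Type*} [Fintype n] (A : Matrix m n ℝ)
    (v : EuclideanSpace ℝ n) : EuclideanSpace ℝ m :=
  (WithLp.equiv 2 (m → ℝ)).symm (A.mulVec ((WithLp.equiv 2 (n → ℝ)) v))

/-- `Z = I - MᵀG(GᵀMMᵀG)⁻¹GᵀM`. -/
noncomputable def Zmat {n d s : Type*} [Fintype n] [Fintype d] [DecidableEq d] [Fintype s]
    [DecidableEq s] (M : Matrix n d ℝ) (G : Matrix n s ℝ) : Matrix d d ℝ :=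
  1 - Mᵀ * G * (Gᵀ * M * Mᵀ * G)⁻¹ * Gᵀ * M

/-- `λ(v) = -(GᵀMMᵀG)⁻¹GᵀMMᵀv`. -/
noncomputable def lamVec {n d s : Type*} [Fintype n] [Fintype d] [Fintype s] [DecidableEq s]
    (M : Matrix n d ℝ) (G : Matrix n s ℝ) (v : EuclideanSpace ℝ n) : EuclideanSpace ℝ s :=
  -(mulVecE ((Gᵀ * M * Mᵀ * G)⁻¹ * Gᵀ * M * Mᵀ) v)

/-- Componentwise positive part `[a]₊`. -/
noncomputable def posPartE {s : Type*} (a : EuclideanSpace ℝ s) : EuclideanSpace ℝ s :=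
  (WithLp.equiv 2 (s → ℝ)).symm (fun i => max ((WithLp.equiv 2 (s → ℝ)) a i) 0)

/-- Smallest eigenvalue of a (symmetric) real matrix. -/
noncomputable def lambdaMin {s : Type*} [Fintype s] (A : Matrix s s ℝ) : ℝ :=
  sInf {r : ℝ | ∃ v : s → ℝ, v ≠ 0 ∧ A.mulVec v = r • v}

section helpers
variable {l m o : Type*} [Fintype m]

lemma mul_vecMulVec' (B : Matrix l m ℝ) (x : m → ℝ) (y : o → ℝ) :
    B * vecMulVec x y = vecMulVec (B *ᵥ x) y := by
  ext i j
  simp only [Matrix.mul_apply, vecMulVec_apply, mulVec, dotProduct, Finset.sum_mul]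
  exact Finset.sum_congr rfl fun k _ => by ring

lemma vecMulVec_mul' (x : l → ℝ) (y : m → ℝ) (B : Matrix m o ℝ) :
    vecMulVec x y * B = vecMulVec x (Bᵀ *ᵥ y) := by
  ext i j
  simp only [Matrix.mul_apply, vecMulVec_apply, mulVec, dotProduct, transpose_apply,
    Finset.mul_sum]
  exact Finset.sum_congr rfl fun k _ => by ring

lemma vecMulVec_mulVec' (x : l → ℝ) (y : m → ℝ) (u : m → ℝ) :
    vecMulVec x y *ᵥ u = (y ⬝ᵥ u) • x := by
  ext i
  simp only [mulVec, dotProduct, vecMulVec_apply, Pi.smul_apply, smul_eq_mul, Finset.sum_mul]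
  exact Finset.sum_congr rfl fun k _ => by ring

lemma vecMulVec_transpose' (x : l → ℝ) (y : o → ℝ) :
    (vecMulVec x y)ᵀ = vecMulVec y x := by
  ext i j; simp [vecMulVec_apply, mul_comm]

lemma vecMulVec_mul_vecMulVec (x : l → ℝ) (y u : m → ℝ) (z : o → ℝ) :
    vecMulVec x y * vecMulVec u z = (y ⬝ᵥ u) • vecMulVec x z := by
  ext i j
  simp only [Matrix.mul_apply, vecMulVec_apply, dotProduct, Matrix.smul_apply, smul_eq_mul,
    Finset.sum_mul]
  exact Finset.sum_congr rfl fun k _ => by ring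

lemma dot_symm (B : Matrix m m ℝ) (h : Bᵀ = B) (x y : m → ℝ) :
    x ⬝ᵥ B *ᵥ y = y ⬝ᵥ B *ᵥ x := by
  rw [Matrix.dotProduct_mulVec, ← Matrix.mulVec_transpose, h]
  exact dotProduct_comm _ _

lemma cs_aux (B : Matrix m m ℝ) (hs : Bᵀ = B)
    (h : ∀ x : m → ℝ, 0 ≤ x ⬝ᵥ B *ᵥ x) (x y : m → ℝ) :
    (x ⬝ᵥ B *ᵥ y) ^ 2 ≤ (x ⬝ᵥ B *ᵥ x) * (y ⬝ᵥ B *ᵥ y) := by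
  have key : ∀ r : ℝ, 0 ≤ (y ⬝ᵥ B *ᵥ y) * (r * r) + (2 * (x ⬝ᵥ B *ᵥ y)) * r + (x ⬝ᵥ B *ᵥ x) := by
    intro r
    have h2 := h (x + r • y)
    have hyx := dot_symm B hs y x
    simp only [Matrix.mulVec_add, Matrix.mulVec_smul, dotProduct_add,
      add_dotProduct, smul_dotProduct, dotProduct_smul, smul_eq_mul] at h2
    rw [hyx] at h2
    nlinarith [h2]
  have hd := discrim_le_zero key
  rw [discrim] at hd
  nlinarith [hd]

lemma dot_mul_mulVec {d s : Type*} [Fintype d] [Fintype s] (B : Matrix d s ℝ)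
    (C : Matrix s d ℝ) (x : d → ℝ) :
    x ⬝ᵥ (B * C) *ᵥ x = (Bᵀ *ᵥ x) ⬝ᵥ (C *ᵥ x) := by
  rw [← Matrix.mulVec_mulVec, Matrix.dotProduct_mulVec, ← Matrix.mulVec_transpose]

lemma innerE_eq {m : Type*} [Fintype m] (x y : EuclideanSpace ℝ m) :
    ⟪x, y⟫_ℝ = (WithLp.equiv 2 (m → ℝ) x) ⬝ᵥ (WithLp.equiv 2 (m → ℝ) y) := by
  simp [PiLp.inner_apply, dotProduct, RCLike.inner_apply]
  exact Finset.sum_congr rfl fun _ _ => mul_comm _ _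

lemma mulVecE_coe {m k : Type*} [Fintype k] (A : Matrix m k ℝ) (x : EuclideanSpace ℝ k) :
    (WithLp.equiv 2 (m → ℝ)) (mulVecE A x) = A *ᵥ (WithLp.equiv 2 (k → ℝ)) x := rfl

end helpers

set_option maxHeartbeats 2000000 in
theorem key {n d s : ℕ} (M : Matrix (Fin n) (Fin d) ℝ) (G : Matrix (Fin n) (Fin s) ℝ)
    (hpd : (Gᵀ * M * Mᵀ * G).PosDef)
    (v' : Fin n → ℝ) (hw0 : Mᵀ *ᵥ v' ≠ 0)
    (σ' : Fin s → ℝ) (hσ0 : σ' ≠ 0)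
    (μ c : ℝ) (hμ : μ = 1 / (2 * Real.sqrt (σ' ⬝ᵥ (Gᵀ * M * Mᵀ * G)⁻¹ *ᵥ σ')))
    (hc : c = μ / Real.sqrt ((Mᵀ *ᵥ v') ⬝ᵥ (Mᵀ *ᵥ v'))) :
    2 / 3 * ((Zmat M G *ᵥ (Mᵀ *ᵥ v')) ⬝ᵥ (Zmat M G *ᵥ (Mᵀ *ᵥ v'))) ≤
      (Mᵀ *ᵥ v') ⬝ᵥ ((1 - (Mᵀ * G * ((G - c • vecMulVec v' σ')ᵀ * M * Mᵀ * G)⁻¹ *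
        (G - c • vecMulVec v' σ')ᵀ * M)) *ᵥ (Mᵀ *ᵥ v')) ∧
    (Mᵀ *ᵥ v') ⬝ᵥ ((1 - (Mᵀ * G * ((G - c • vecMulVec v' σ')ᵀ * M * Mᵀ * G)⁻¹ *
        (G - c • vecMulVec v' σ')ᵀ * M)) *ᵥ (Mᵀ *ᵥ v')) ≤
      2 * ((Zmat M G *ᵥ (Mᵀ *ᵥ v')) ⬝ᵥ (Zmat M G *ᵥ (Mᵀ *ᵥ v'))) := by
  classical
  obtain ⟨A, hA⟩ : ∃ X, X = Gᵀ * M * Mᵀ * G := ⟨_, rfl⟩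
  rw [← hA] at hpd hμ
  obtain ⟨w, hw⟩ : ∃ x, x = Mᵀ *ᵥ v' := ⟨_, rfl⟩
  rw [← hw] at hw0 hc ⊢
  obtain ⟨b, hb⟩ : ∃ x, x = (Gᵀ * M) *ᵥ w := ⟨_, rfl⟩
  -- basic facts about A
  have hAs : Aᵀ = A := by rw [hA]; simp [Matrix.transpose_mul, Matrix.mul_assoc]
  have hdet : IsUnit A.det := hpd.det_pos.ne'.isUnit
  have hAiA : A⁻¹ * A = 1 := Matrix.nonsing_inv_mul A hdet
  have hAAi : A * A⁻¹ = 1 := Matrix.mul_nonsing_inv A hdet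
  have hAis : A⁻¹ᵀ = A⁻¹ := by rw [Matrix.transpose_nonsing_inv, hAs]
  have hAipd : A⁻¹.PosDef := hpd.inv
  have hAinn : ∀ x : Fin s → ℝ, 0 ≤ x ⬝ᵥ A⁻¹ *ᵥ x := by
    intro x
    simpa using hAipd.posSemidef.dotProduct_mulVec_nonneg x
  obtain ⟨q, hq⟩ : ∃ r, r = σ' ⬝ᵥ A⁻¹ *ᵥ σ' := ⟨_, rfl⟩
  rw [← hq] at hμ
  obtain ⟨t, ht⟩ : ∃ r, r = b ⬝ᵥ A⁻¹ *ᵥ σ' := ⟨_, rfl⟩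
  obtain ⟨β, hβ⟩ : ∃ r, r = b ⬝ᵥ A⁻¹ *ᵥ b := ⟨_, rfl⟩
  obtain ⟨nw2, hnw2⟩ : ∃ r, r = w ⬝ᵥ w := ⟨_, rfl⟩
  rw [← hnw2] at hc
  have hqpos : 0 < q := by rw [hq]; simpa using hAipd.dotProduct_mulVec_pos hσ0
  have hβnn : 0 ≤ β := hβ ▸ hAinn b
  have hnw2pos : 0 < nw2 := by
    rw [hnw2]
    rcases lt_or_eq_of_le (Finset.sum_nonneg fun i (_ : i ∈ Finset.univ) =>
      mul_self_nonneg (w i)) with h | h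
    · exact h
    · exfalso
      apply hw0
      have h2 := dotProduct_star_self_eq_zero (v := w)
      simp only [star_trivial] at h2
      exact h2.1 h.symm
  -- the projection P and Z
  obtain ⟨P, hP⟩ : ∃ X, X = Mᵀ * G * A⁻¹ * (Gᵀ * M) := ⟨_, rfl⟩
  have hGMMG : Gᵀ * M * (Mᵀ * G) = A := by rw [hA]; simp only [Matrix.mul_assoc]
  have hPP : P * P = P := by
    rw [hP]
    calc Mᵀ * G * A⁻¹ * (Gᵀ * M) * (Mᵀ * G * A⁻¹ * (Gᵀ * M))
        = Mᵀ * G * (A⁻¹ * ((Gᵀ * M * (Mᵀ * G)) * (A⁻¹ * (Gᵀ * M)))) := by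
          simp only [Matrix.mul_assoc]
      _ = Mᵀ * G * (A⁻¹ * (A * (A⁻¹ * (Gᵀ * M)))) := by rw [hGMMG]
      _ = Mᵀ * G * A⁻¹ * (Gᵀ * M) := by
          rw [← Matrix.mul_assoc A, hAAi, Matrix.one_mul]
          simp only [Matrix.mul_assoc]
  have hPs : Pᵀ = P := by
    rw [hP]
    simp only [Matrix.transpose_mul, Matrix.transpose_transpose, hAis]
    simp only [Matrix.mul_assoc]
  have hZ : Zmat M G = 1 - P := by
    unfold Zmat
    rw [← hA, hP]
    simp only [Matrix.mul_assoc]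
  have hwPw : w ⬝ᵥ P *ᵥ w = β := by
    rw [hP]
    have h1 : (Mᵀ * G * A⁻¹ * (Gᵀ * M)) *ᵥ w = (Mᵀ * G) *ᵥ (A⁻¹ *ᵥ b) := by
      rw [hb]
      simp only [← Matrix.mulVec_mulVec]
    rw [h1, Matrix.dotProduct_mulVec, ← Matrix.mulVec_transpose, Matrix.transpose_mul,
      Matrix.transpose_transpose, ← hb, ← hβ]
  -- norm of Z w
  have hZw : (Zmat M G *ᵥ w) ⬝ᵥ (Zmat M G *ᵥ w) = nw2 - β := by
    have h1 : Zmat M G *ᵥ w = w - P *ᵥ w := by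
      rw [hZ, Matrix.sub_mulVec, Matrix.one_mulVec]
    have hPwPw : (P *ᵥ w) ⬝ᵥ (P *ᵥ w) = β := by
      have h2 : (P *ᵥ w) ⬝ᵥ (P *ᵥ w) = (Pᵀ *ᵥ (P *ᵥ w)) ⬝ᵥ w := by
        rw [Matrix.dotProduct_mulVec _ P w, ← Matrix.mulVec_transpose]
      rw [h2, Matrix.mulVec_mulVec, hPs, hPP, dotProduct_comm]
      exact hwPw
    have h3 : (P *ᵥ w) ⬝ᵥ w = β := by rw [dotProduct_comm]; exact hwPw
    rw [h1]
    simp only [dotProduct_sub, sub_dotProduct]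
    rw [hwPw, h3, hPwPw, ← hnw2]
    ring
  have hZwnn : 0 ≤ nw2 - β := by
    rw [← hZw]
    exact Finset.sum_nonneg fun i _ => mul_self_nonneg _
  have hβle : β ≤ nw2 := by linarith
  -- Cauchy–Schwarz bound on t
  have hCS : t ^ 2 ≤ β * q := by
    have h4 := cs_aux A⁻¹ hAis hAinn b σ'
    rw [← ht, ← hβ, ← hq] at h4
    exact h4
  -- bound |c t| ≤ 1/2
  have hcnn : 0 ≤ c := by
    rw [hc, hμ]
    have h1 : (0:ℝ) ≤ 1 / (2 * Real.sqrt q) :=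
      div_nonneg zero_le_one (mul_nonneg (by norm_num) (Real.sqrt_nonneg q))
    exact div_nonneg h1 (Real.sqrt_nonneg _)
  have hc2 : c ^ 2 * (4 * q * nw2) = 1 := by
    rw [hc, hμ]
    rw [div_pow, div_pow, one_pow, mul_pow]
    rw [Real.sq_sqrt hqpos.le, Real.sq_sqrt hnw2pos.le]
    field_simp
    norm_num
  have hct2 : (c * t) ^ 2 ≤ 1 / 4 := by
    have h1 : t ^ 2 ≤ q * nw2 := by nlinarith
    have h2 : c ^ 2 * t ^ 2 ≤ c ^ 2 * (q * nw2) :=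
      mul_le_mul_of_nonneg_left h1 (sq_nonneg c)
    nlinarith
  have hctlo : c * t ≤ 1 / 2 := by nlinarith [sq_nonneg (c * t - 1 / 2)]
  have hcthi : -(1 / 2) ≤ c * t := by nlinarith [sq_nonneg (c * t + 1 / 2)]
  have hDpos : 0 < 1 - c * t := by linarith
  have hden : 1 - c * t ≠ 0 := ne_of_gt hDpos
  -- Sherman–Morrison
  obtain ⟨V, hV⟩ : ∃ X, X = vecMulVec σ' b := ⟨_, rfl⟩
  have hvts : (vecMulVec v' σ')ᵀ = vecMulVec σ' v' := vecMulVec_transpose' _ _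
  have hH : (G - c • vecMulVec v' σ')ᵀ * M * Mᵀ * G = A - c • V := by
    rw [Matrix.transpose_sub, Matrix.transpose_smul, hvts]
    rw [Matrix.sub_mul, Matrix.sub_mul, Matrix.sub_mul]
    rw [Matrix.smul_mul, Matrix.smul_mul, Matrix.smul_mul]
    rw [vecMulVec_mul' σ' v' M, vecMulVec_mul', vecMulVec_mul']
    rw [hV, hb, hw]
    simp only [Matrix.transpose_transpose, Matrix.mulVec_mulVec, ← hA]
    rw [← Matrix.mul_assoc]
  obtain ⟨k, hk⟩ : ∃ r, r = c / (1 - c * t) := ⟨_, rfl⟩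
  obtain ⟨X, hX⟩ : ∃ Y, Y = A⁻¹ + k • (A⁻¹ * V * A⁻¹) := ⟨_, rfl⟩
  have hVA : V * A⁻¹ = vecMulVec σ' (A⁻¹ *ᵥ b) := by rw [hV, vecMulVec_mul', hAis]
  have hAb_dot : (A⁻¹ *ᵥ b) ⬝ᵥ σ' = t := by
    calc (A⁻¹ *ᵥ b) ⬝ᵥ σ' = σ' ⬝ᵥ (A⁻¹ *ᵥ b) := dotProduct_comm _ _
      _ = b ⬝ᵥ A⁻¹ *ᵥ σ' := dot_symm _ hAis _ _
      _ = t := ht.symm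
  have hVAV : V * A⁻¹ * V = t • V := by
    rw [hVA, hV, _root_.vecMulVec_mul_vecMulVec, hAb_dot]
  have hk1 : k * (1 - c * t) = c := by rw [hk]; field_simp
  have hHX : (A - c • V) * X = 1 := by
    rw [hX, Matrix.sub_mul, Matrix.mul_add, Matrix.mul_add]
    have e1 : A * (k • (A⁻¹ * V * A⁻¹)) = k • (V * A⁻¹) := by
      rw [Matrix.mul_smul]
      congr 1
      calc A * (A⁻¹ * V * A⁻¹) = (A * A⁻¹) * (V * A⁻¹) := by simp only [Matrix.mul_assoc]
        _ = V * A⁻¹ := by rw [hAAi, Matrix.one_mul]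
    have e2 : (c • V) * A⁻¹ = c • (V * A⁻¹) := Matrix.smul_mul _ _ _
    have e3 : (c • V) * (k • (A⁻¹ * V * A⁻¹)) = (c * k * t) • (V * A⁻¹) := by
      rw [Matrix.smul_mul, Matrix.mul_smul, smul_smul]
      have h4 : V * (A⁻¹ * V * A⁻¹) = t • (V * A⁻¹) := by
        calc V * (A⁻¹ * V * A⁻¹) = (V * A⁻¹ * V) * A⁻¹ := by simp only [Matrix.mul_assoc]
          _ = (t • V) * A⁻¹ := by rw [hVAV]
          _ = t • (V * A⁻¹) := Matrix.smul_mul _ _ _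
      rw [h4, smul_smul, mul_assoc]
    rw [e1, e2, e3, hAAi]
    have hcoef : k = c + c * k * t := by linear_combination hk1
    have hz : k • (V * A⁻¹) - (c • (V * A⁻¹) + (c * k * t) • (V * A⁻¹)) = 0 := by
      rw [← add_smul, ← sub_smul]
      rw [show k - (c + c * k * t) = 0 by linarith [hcoef]]
      rw [zero_smul]
    rw [add_sub_assoc, hz, add_zero]
  have hHinv : (A - c • V)⁻¹ = X := Matrix.inv_eq_right_inv hHX
  -- the vector pieces
  have hu1 : ((G - c • vecMulVec v' σ')ᵀ * M) *ᵥ w = b - (c * nw2) • σ' := by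
    rw [Matrix.transpose_sub, Matrix.transpose_smul, hvts, Matrix.sub_mul, Matrix.smul_mul,
      vecMulVec_mul' σ' v' M]
    rw [Matrix.sub_mulVec, Matrix.smul_mulVec, ← hw]
    rw [vecMulVec_mulVec', ← hnw2, hb, smul_smul]
  have hXb : X *ᵥ b = A⁻¹ *ᵥ b + (k * β) • (A⁻¹ *ᵥ σ') := by
    rw [hX, Matrix.add_mulVec, Matrix.smul_mulVec]
    congr 1
    rw [← Matrix.mulVec_mulVec, ← Matrix.mulVec_mulVec, hV, vecMulVec_mulVec', ← hβ,
      Matrix.mulVec_smul, smul_smul]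
  have hXσ : X *ᵥ σ' = (1 + k * t) • (A⁻¹ *ᵥ σ') := by
    rw [hX, Matrix.add_mulVec, Matrix.smul_mulVec]
    rw [← Matrix.mulVec_mulVec, ← Matrix.mulVec_mulVec, hV, vecMulVec_mulVec', ← ht,
      Matrix.mulVec_smul, smul_smul, add_smul, one_smul]
  have hwR'w : w ⬝ᵥ (Mᵀ * G * X * (G - c • vecMulVec v' σ')ᵀ * M) *ᵥ w
      = (β + k * β * t) - (c * nw2) * (t + k * t * t) := by
    have hmat : Mᵀ * G * X * (G - c • vecMulVec v' σ')ᵀ * M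
        = (Mᵀ * G) * (X * ((G - c • vecMulVec v' σ')ᵀ * M)) := by
      simp only [Matrix.mul_assoc]
    rw [hmat, ← Matrix.mulVec_mulVec]
    rw [Matrix.dotProduct_mulVec, ← Matrix.mulVec_transpose, Matrix.transpose_mul,
      Matrix.transpose_transpose, ← hb]
    rw [← Matrix.mulVec_mulVec, hu1]
    rw [Matrix.mulVec_sub, Matrix.mulVec_smul, hXb, hXσ]
    simp only [dotProduct_sub, dotProduct_add, dotProduct_smul,
      smul_eq_mul, smul_smul]
    rw [← hβ, ← ht]
    ring
  -- the main identity
  have hform : w ⬝ᵥ ((1 - (Mᵀ * G * ((G - c • vecMulVec v' σ')ᵀ * M * Mᵀ * G)⁻¹ *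
        (G - c • vecMulVec v' σ')ᵀ * M)) *ᵥ w) = (nw2 - β) / (1 - c * t) := by
    rw [hH, hHinv]
    rw [Matrix.sub_mulVec, Matrix.one_mulVec, dotProduct_sub]
    rw [hwR'w, ← hnw2, hk]
    field_simp
    ring
  rw [hform, hZw]
  constructor
  · rw [le_div_iff₀ hDpos]
    have h5 := mul_nonneg hZwnn (show (0:ℝ) ≤ 3 / 2 - (1 - c * t) by linarith)
    nlinarith [h5]
  · rw [div_le_iff₀ hDpos]
    have h5 := mul_nonneg hZwnn (show (0:ℝ) ≤ 2 * (1 - c * t) - 1 by linarith)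
    nlinarith [h5]

lemma normE_sq {m : Type*} [Fintype m] (x : EuclideanSpace ℝ m) :
    ‖x‖ ^ 2 = (WithLp.equiv 2 (m → ℝ) x) ⬝ᵥ (WithLp.equiv 2 (m → ℝ) x) := by
  rw [← real_inner_self_eq_norm_sq, innerE_eq]


theorem stmt14 {n d s : ℕ} (hn : 0 < n) (hd : 0 < d) (hs : 0 < s)
    (M : Matrix (Fin n) (Fin d) ℝ) (G : Matrix (Fin n) (Fin s) ℝ)
    (hpd : (Gᵀ * M * Mᵀ * G).PosDef)
    (v : EuclideanSpace ℝ (Fin n)) (hv : mulVecE Mᵀ v ≠ 0)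
    (σ : EuclideanSpace ℝ (Fin s)) (hσ : σ ≠ 0)
    (μ : ℝ) (hμ : μ = 1 / (2 * Real.sqrt ⟪σ, mulVecE ((Gᵀ * M * Mᵀ * G)⁻¹) σ⟫_ℝ))
    (R' : Matrix (Fin d) (Fin d) ℝ)
    (hR' : R' = Mᵀ * G *
        ((G - (μ / ‖mulVecE Mᵀ v‖) •
            vecMulVec ((WithLp.equiv 2 (Fin n → ℝ)) v) ((WithLp.equiv 2 (Fin s → ℝ)) σ))ᵀ
          * M * Mᵀ * G)⁻¹ *
        (G - (μ / ‖mulVecE Mᵀ v‖) •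
            vecMulVec ((WithLp.equiv 2 (Fin n → ℝ)) v) ((WithLp.equiv 2 (Fin s → ℝ)) σ))ᵀ * M)
    (R : Matrix (Fin d) (Fin d) ℝ) (hR : R = 1 - R') :
    (2 / 3) * ‖mulVecE (Zmat M G) (mulVecE Mᵀ v)‖ ^ 2
        ≤ ⟪v, mulVecE M (mulVecE R (mulVecE Mᵀ v))⟫_ℝ ∧
    ⟪v, mulVecE M (mulVecE R (mulVecE Mᵀ v))⟫_ℝ
        ≤ 2 * ‖mulVecE (Zmat M G) (mulVecE Mᵀ v)‖ ^ 2 := by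
  subst hR' hR
  have hw0 : Mᵀ *ᵥ ((WithLp.equiv 2 (Fin n → ℝ)) v) ≠ 0 := by
    intro h
    apply hv
    have h1 : mulVecE Mᵀ v =
        (WithLp.equiv 2 (Fin d → ℝ)).symm (Mᵀ *ᵥ ((WithLp.equiv 2 (Fin n → ℝ)) v)) := rfl
    rw [h1, h]
    rfl
  have hσ0 : (WithLp.equiv 2 (Fin s → ℝ)) σ ≠ 0 := by
    intro h
    apply hσ
    have h1 := congrArg (WithLp.equiv 2 (Fin s → ℝ)).symm h
    simpa using h1
  have hnorm : ‖mulVecE Mᵀ v‖ = Real.sqrt ((Mᵀ *ᵥ ((WithLp.equiv 2 (Fin n → ℝ)) v)) ⬝ᵥ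
      (Mᵀ *ᵥ ((WithLp.equiv 2 (Fin n → ℝ)) v))) := by
    have h1 : ‖mulVecE Mᵀ v‖ ^ 2 = (Mᵀ *ᵥ ((WithLp.equiv 2 (Fin n → ℝ)) v)) ⬝ᵥ
        (Mᵀ *ᵥ ((WithLp.equiv 2 (Fin n → ℝ)) v)) := by
      rw [normE_sq, mulVecE_coe]
    rw [← Real.sqrt_sq (norm_nonneg (mulVecE Mᵀ v)), h1]
  have hμ' : μ = 1 / (2 * Real.sqrt (((WithLp.equiv 2 (Fin s → ℝ)) σ) ⬝ᵥ
      (Gᵀ * M * Mᵀ * G)⁻¹ *ᵥ ((WithLp.equiv 2 (Fin s → ℝ)) σ))) := by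
    rw [hμ, innerE_eq, mulVecE_coe]
  have H := key M G hpd ((WithLp.equiv 2 (Fin n → ℝ)) v) hw0
    ((WithLp.equiv 2 (Fin s → ℝ)) σ) hσ0 μ (μ / ‖mulVecE Mᵀ v‖) hμ' (by rw [hnorm])
  have hdot : ∀ u : Fin d → ℝ,
      ((WithLp.equiv 2 (Fin n → ℝ)) v) ⬝ᵥ M *ᵥ u =
        (Mᵀ *ᵥ ((WithLp.equiv 2 (Fin n → ℝ)) v)) ⬝ᵥ u := by
    intro u
    rw [Matrix.dotProduct_mulVec, ← Matrix.mulVec_transpose]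
  simp only [normE_sq, innerE_eq, mulVecE_coe]
  rw [hdot]
  exact H
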